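/- For every k ≥ 2, every IMAB instance I = (f_1, …, f_k), and every time horizon T ≥ 2k that is a multiple of k, the round-robin algorithm satisfies OPT(I,T) ≤ 8k²·RR(I,T); i.e., the competitive ratio of round-robin is at most 8k². -/

import Mathlib

open scoped Classical

/-- A reward function: bounded in [0,1], nondecreasing, with decreasing marginal returns. -/
def IsRewardFn (f : ℕ → ℝ) : Prop :=
  (∀ n, 0 ≤ f n) ∧ (∀ n, f n ≤ 1) ∧ Monotone f ∧
    ∀ n, 1 ≤ n → f (n + 1) - f n ≤ f n - f (n - 1)

/-- Cumulative reward from pulling an arm with reward function `f` for `N` pulls. -/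
noncomputable def Rew (f : ℕ → ℝ) (N : ℕ) : ℝ := ∑ n ∈ Finset.Icc 1 N, f n

/-- Offline optimum: the best total reward over all allocations of `T` pulls to the `k` arms. -/
noncomputable def OPT {k : ℕ} (f : Fin k → ℕ → ℝ) (T : ℕ) : ℝ :=
  sSup {x : ℝ | ∃ M : Fin k → ℕ, (∑ i, M i) = T ∧ x = ∑ i, Rew (f i) (M i)}

lemma concave_ratio (f : ℕ → ℝ) (hf : IsRewardFn f) {n m : ℕ} (hnm : n ≤ m) :
    (n : ℝ) * f m ≤ (m : ℝ) * f n := by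
  obtain ⟨h0, h1, hmono, hconc⟩ := hf
  rcases Nat.eq_zero_or_pos n with rfl | hn
  · simpa using mul_nonneg (Nat.cast_nonneg m) (h0 0)
  · set d : ℕ → ℝ := fun j => f (j + 1) - f j with hd
    have hanti : Antitone d := antitone_nat_of_succ_le (fun j => by
      have := hconc (j + 1) (by omega)
      simpa [d] using this)
    have htel : ∀ p : ℕ, ∑ j ∈ Finset.range p, d j = f p - f 0 := by
      intro p; simpa [d] using Finset.sum_range_sub f p
    have hS1 : (n : ℝ) * d (n - 1) ≤ f n - f 0 := by
      have := Finset.card_nsmul_le_sum (Finset.range n) d (d (n - 1))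
        (fun j hj => hanti (by simp at hj; omega))
      simpa [htel, nsmul_eq_mul] using this
    have hS2 : f m - f n ≤ ((m - n : ℕ) : ℝ) * d (n - 1) := by
      have hsum : ∑ j ∈ Finset.Ico n m, d j = f m - f n := by
        rw [Finset.sum_Ico_eq_sub _ hnm, htel, htel]; ring
      have := Finset.sum_le_card_nsmul (Finset.Ico n m) d (d (n - 1))
        (fun j hj => hanti (by simp at hj; omega))
      simpa [hsum, nsmul_eq_mul] using this
    have hcast : ((m - n : ℕ) : ℝ) = (m : ℝ) - n := by
      rw [Nat.cast_sub hnm]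
    rw [hcast] at hS2
    have hn' : (1 : ℝ) ≤ (n : ℝ) := by exact_mod_cast hn
    have hmn : (n : ℝ) ≤ (m : ℝ) := by exact_mod_cast hnm
    have hf0 : 0 ≤ f 0 := h0 0
    nlinarith [mul_le_mul_of_nonneg_left hS2 (by positivity : (0:ℝ) ≤ (n:ℝ)),
      mul_le_mul_of_nonneg_left hS1 (by linarith : (0:ℝ) ≤ (m:ℝ) - n),
      mul_nonneg (by linarith : (0:ℝ) ≤ (m:ℝ) - n) hf0]

lemma gauss_icc (m : ℕ) : ∑ n ∈ Finset.Icc 1 m, (n : ℝ) = m * (m + 1) / 2 := by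
  induction m with
  | zero => simp
  | succ p ih =>
    rw [Finset.sum_Icc_succ_top (by omega)]
    push_cast
    rw [ih]; ring

lemma rew_lower (f : ℕ → ℝ) (hf : IsRewardFn f) (m : ℕ) :
    (m : ℝ) ^ 2 * f m ≤ 2 * m * Rew f m := by
  have key : ∀ n ∈ Finset.Icc 1 m, (n : ℝ) * f m ≤ (m : ℝ) * f n := by
    intro n hn
    simp only [Finset.mem_Icc] at hn
    exact concave_ratio f hf hn.2
  have hsum := Finset.sum_le_sum key
  rw [← Finset.sum_mul, gauss_icc, ← Finset.mul_sum] at hsum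
  have hfm : 0 ≤ f m := hf.1 m
  have hm : (0 : ℝ) ≤ m := Nat.cast_nonneg m
  unfold Rew
  nlinarith [hsum]

lemma rew_bound (f : ℕ → ℝ) (hf : IsRewardFn f) (k m N : ℕ) (hk1 : 1 ≤ k) (hm : 1 ≤ m)
    (hN : N ≤ k * m) : Rew f N ≤ 2 * (k : ℝ) ^ 2 * Rew f m := by
  have hRnn : ∀ p, 0 ≤ Rew f p := fun p =>
    Finset.sum_nonneg fun n _ => hf.1 n
  rcases le_or_gt N m with hNm | hmN
  · have hmono : Rew f N ≤ Rew f m := by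
      unfold Rew
      apply Finset.sum_le_sum_of_subset_of_nonneg
      · exact Finset.Icc_subset_Icc_right hNm
      · intro n _ _; exact hf.1 n
    have hk' : (1 : ℝ) ≤ (k : ℝ) := by exact_mod_cast hk1
    nlinarith [hRnn m, mul_nonneg (by nlinarith : (0:ℝ) ≤ 2 * (k:ℝ)^2 - 1) (hRnn m)]
  · have h1 : Rew f N ≤ (N : ℝ) * f N := by
      unfold Rew
      calc ∑ n ∈ Finset.Icc 1 N, f n ≤ ∑ n ∈ Finset.Icc 1 N, f N :=
            Finset.sum_le_sum fun n hn => hf.2.2.1 (Finset.mem_Icc.mp hn).2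
        _ = (N : ℝ) * f N := by
            rw [Finset.sum_const, Nat.card_Icc]
            simp [nsmul_eq_mul]
    have h2 : (m : ℝ) * f N ≤ (N : ℝ) * f m := concave_ratio f hf hmN.le
    have h3 : (m : ℝ) ^ 2 * f m ≤ 2 * m * Rew f m := rew_lower f hf m
    have hNk : (N : ℝ) ≤ (k : ℝ) * m := by exact_mod_cast hN
    have hm' : (1 : ℝ) ≤ (m : ℝ) := by exact_mod_cast hm
    have hfN : 0 ≤ f N := hf.1 N
    have hfm : 0 ≤ f m := hf.1 m
    have hN0 : (0 : ℝ) ≤ N := Nat.cast_nonneg N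
    have hk' : (1 : ℝ) ≤ (k : ℝ) := by exact_mod_cast hk1
    -- show m^2 * Rew f N ≤ m^2 * (2 k^2 Rew f m), then cancel
    have hm2 : (0 : ℝ) < (m : ℝ) ^ 2 := by positivity
    rw [← mul_le_mul_iff_right₀ hm2]
    have step1 : (m : ℝ) ^ 2 * Rew f N ≤ (m : ℝ) ^ 2 * ((N : ℝ) * f N) :=
      mul_le_mul_of_nonneg_left h1 (by positivity)
    have step2 : (m : ℝ) ^ 2 * ((N : ℝ) * f N) ≤ (m : ℝ) * (N : ℝ) * ((N : ℝ) * f m) := by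
      have := mul_le_mul_of_nonneg_left h2 (mul_nonneg (by linarith : (0:ℝ) ≤ (m:ℝ)) hN0)
      nlinarith [this]
    have step3 : (m : ℝ) * (N : ℝ) * ((N : ℝ) * f m) ≤ (N : ℝ) ^ 2 * (2 * Rew f m) := by
      have h3' : (m : ℝ) * f m ≤ 2 * Rew f m := by nlinarith [h3]
      nlinarith [mul_le_mul_of_nonneg_left h3' (by positivity : (0:ℝ) ≤ (N:ℝ)^2)]
    have step4 : (N : ℝ) ^ 2 * (2 * Rew f m) ≤ (m : ℝ) ^ 2 * (2 * (k : ℝ) ^ 2 * Rew f m) := by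
      have hN2 : (N : ℝ) ^ 2 ≤ ((k : ℝ) * m) ^ 2 := by nlinarith
      nlinarith [mul_le_mul_of_nonneg_right hN2 (by linarith [hRnn m] : (0:ℝ) ≤ 2 * Rew f m), hRnn m]
    linarith

/-- The competitive ratio of the round-robin algorithm is at most `8k²`: for every instance
and every horizon `T ≥ 2k` that is a multiple of `k`,
`OPT(I,T) ≤ 8k² · RR(I,T)` where `RR(I,T) = ∑ i, Rew (f i) (T / k)`. -/
theorem round_robin_upper_bound (k T : ℕ) (hk : 2 ≤ k) (hT : 2 * k ≤ T) (hdvd : k ∣ T)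
    (f : Fin k → ℕ → ℝ) (hf : ∀ i, IsRewardFn (f i)) :
    OPT f T ≤ 8 * (k : ℝ) ^ 2 * ∑ i, Rew (f i) (T / k) := by
  set m := T / k with hm
  have hkpos : 0 < k := by omega
  have hkm : k * m = T := Nat.mul_div_cancel' hdvd
  have hm2 : 2 ≤ m := by
    have := Nat.le_div_iff_mul_le hkpos |>.mpr (by omega : 2 * k ≤ T)
    omega
  have hRR : 0 ≤ ∑ i, Rew (f i) m :=
    Finset.sum_nonneg fun i _ => Finset.sum_nonneg fun n _ => (hf i).1 n
  have hk' : (1 : ℝ) ≤ (k : ℝ) := by exact_mod_cast (by omega : 1 ≤ k)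
  apply Real.sSup_le
  · rintro x ⟨M, hM, rfl⟩
    have hbound : ∀ i : Fin k, Rew (f i) (M i) ≤ 2 * (k : ℝ) ^ 2 * Rew (f i) m := by
      intro i
      apply rew_bound (f i) (hf i) k m (M i) (by omega) (by omega)
      have : M i ≤ T := hM ▸ Finset.single_le_sum (fun j _ => Nat.zero_le (M j)) (Finset.mem_univ i)
      omega
    calc ∑ i, Rew (f i) (M i) ≤ ∑ i, 2 * (k : ℝ) ^ 2 * Rew (f i) m :=
          Finset.sum_le_sum fun i _ => hbound i
      _ = 2 * (k : ℝ) ^ 2 * ∑ i, Rew (f i) m := by rw [Finset.mul_sum]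
      _ ≤ 8 * (k : ℝ) ^ 2 * ∑ i, Rew (f i) m := by nlinarith
  · positivity
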